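/- Let (A,+) be an abelian group, ψ an automorphism of (A,+), and x ∈ A such that: (1) the orbit X := {ψ^z(x) : z ∈ ℤ} has more than one element and generates the group (A,+); and (2) for all k ∈ ℕ and all integers a_1, …, a_k, z_1, …, z_k, if a_1 ψ^{z_1}(x) + ⋯ + a_k ψ^{z_k}(x) = 0 then ψ^{a_1 + ⋯ + a_k} = id_A. Then there exists a binary operation ∘ on A such that (A, +, ∘) is a one-generator left brace of multipermutation level 2 in which λ_t = ψ for every t ∈ X; explicitly, a∘b := a + λ_a(b) where λ is the group homomorphism from (A,+) to Aut(A,+) determined by λ_t := ψ for t ∈ X. -/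

import Mathlib

/-- The socle series of a brace-like structure on an abelian group `(A,+)` with
multiplication `mul`: `Soc_0 = {0}`, `Soc_{n+1} = {a | ∀ b, a + b - a∘b ∈ Soc_n}`. -/
def socSeqF {A : Type*} [AddCommGroup A] (mul : A → A → A) : ℕ → Set A
  | 0 => {0}
  | n + 1 => {a | ∀ b, a + b - mul a b ∈ socSeqF mul n}

/-- Multipermutation level `n`: `n` minimal with `Soc_n = A`. -/
def BraceMPLF {A : Type*} [AddCommGroup A] (mul : A → A → A) (n : ℕ) : Prop :=
  socSeqF mul n = Set.univ ∧ ∀ m < n, socSeqF mul m ≠ Set.univ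

/-- A sub-left-brace: a subgroup of `(A,+)` which is also a subgroup of `(A,∘)`,
i.e. nonempty and closed under `mul` and the `∘`-inverse `inv`. -/
def IsSubBraceF {A : Type*} [AddCommGroup A] (mul : A → A → A) (inv : A → A)
    (B : Set A) : Prop :=
  (∃ Sa : AddSubgroup A, (Sa : Set A) = B) ∧ B.Nonempty ∧
    (∀ a ∈ B, ∀ b ∈ B, mul a b ∈ B) ∧ (∀ a ∈ B, inv a ∈ B)

/-- `A(x)`: the smallest sub-left-brace containing `x`. -/
def braceClosureF {A : Type*} [AddCommGroup A] (mul : A → A → A) (inv : A → A)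
    (x : A) : Set A :=
  ⋂₀ {B : Set A | IsSubBraceF mul inv B ∧ x ∈ B}

/-- Given an abelian group `(A,+)`, `ψ ∈ Aut(A,+)` and `x ∈ A` with a
nontrivial generating orbit `X = {ψ^z(x)}` such that `∑ aᵢ ψ^{zᵢ}(x) = 0` forces
`ψ^{∑ aᵢ} = id`, there is a multiplication `a ∘ b := a + Λ_a(b)` — where
`Λ : (A,+) → Aut(A,+)` is the homomorphism determined by `Λ_t := ψ` for `t ∈ X` —
making `(A,+,∘)` a one-generator left brace of multipermutation level 2 in which
`λ_t = ψ` for every `t ∈ X`. -/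
theorem stmt19 {A : Type} [AddCommGroup A] (ψ : AddAut A) (x : A)
    (h1a : (Set.range fun z : ℤ => ((z • ψ : AddAut A)) x).Nontrivial)
    (h1b : AddSubgroup.closure (Set.range fun z : ℤ => ((z • ψ : AddAut A)) x) = ⊤)
    (h2 : ∀ (m : ℕ) (a z : Fin m → ℤ),
      (∑ i, a i • ((z i • ψ : AddAut A)) x) = 0 → (∑ i, a i) • ψ = 0) :
    ∃ (Λ : A → AddAut A) (e : A) (inv : A → A),
      -- Λ is the additive-to-multiplicative homomorphism with Λ_t = ψ on the orbit X
      (∀ t ∈ Set.range fun z : ℤ => ((z • ψ : AddAut A)) x, Λ t = ψ) ∧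
      (∀ a b : A, Λ (a + b) = Λ a + Λ b) ∧
      -- a ∘ b := a + Λ_a(b) is a group operation with identity e and inverse inv
      (∀ a b c : A, (a + Λ a b) + Λ (a + Λ a b) c = a + Λ a (b + Λ b c)) ∧
      (∀ a : A, e + Λ e a = a) ∧ (∀ a : A, a + Λ a e = a) ∧
      (∀ a : A, inv a + Λ (inv a) a = e) ∧ (∀ a : A, a + Λ a (inv a) = e) ∧
      -- the left brace compatibility (so λ_a(b) = -a + a∘b = Λ_a(b))
      (∀ a b c : A, (a + Λ a (b + c)) + a = (a + Λ a b) + (a + Λ a c)) ∧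
      -- one-generator, of multipermutation level 2
      (∃ y : A, braceClosureF (fun a b => a + Λ a b) inv y = Set.univ) ∧
      BraceMPLF (fun a b => a + Λ a b) 2 := by
  classical
  -- the two key homomorphisms out of the free abelian group ℤ →₀ ℤ
  let p : (ℤ →₀ ℤ) →+ A := Finsupp.liftAddHom (fun z => zmultiplesHom A ((z • ψ) x))
  let S : (ℤ →₀ ℤ) →+ ℤ := Finsupp.liftAddHom (fun _ => AddMonoidHom.id ℤ)
  have hp_single : ∀ (z n : ℤ), p (Finsupp.single z n) = n • (z • ψ) x := by
    intro z n
    show (Finsupp.liftAddHom _) _ = _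
    rw [Finsupp.liftAddHom_apply_single, zmultiplesHom_apply]
  have hS_single : ∀ (z n : ℤ), S (Finsupp.single z n) = n := by
    intro z n
    show (Finsupp.liftAddHom _) _ = _
    rw [Finsupp.liftAddHom_apply_single]; rfl
  have hp_apply : ∀ f : ℤ →₀ ℤ, p f = ∑ z ∈ f.support, f z • (z • ψ) x := by
    intro f
    show (Finsupp.liftAddHom _) _ = _
    rw [Finsupp.liftAddHom_apply]; rfl
  have hS_apply : ∀ f : ℤ →₀ ℤ, S f = ∑ z ∈ f.support, f z := by
    intro f
    show (Finsupp.liftAddHom _) _ = _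
    rw [Finsupp.liftAddHom_apply]; rfl
  -- the key well-definedness fact
  have key : ∀ f : ℤ →₀ ℤ, p f = 0 → S f • ψ = 0 := by
    intro f hf
    let e := f.support.equivFin
    have hsum : ∀ {M : Type} [AddCommMonoid M] (F : ℤ → M),
        (∑ i, F ((e.symm i : ℤ))) = ∑ z ∈ f.support, F z := by
      intro M _ F
      rw [← Finset.sum_coe_sort f.support F]
      exact Equiv.sum_comp e.symm (fun s => F (s : ℤ))
    have h0 : (∑ i, f ((e.symm i : ℤ)) • (((e.symm i : ℤ)) • ψ) x) = 0 := by
      rw [hsum (fun z => f z • (z • ψ) x), ← hp_apply, hf]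
    have h := h2 f.support.card (fun i => f ((e.symm i : ℤ)))
      (fun i => ((e.symm i : ℤ))) h0
    rwa [hsum (fun z => f z), ← hS_apply] at h
  have W : ∀ f g : ℤ →₀ ℤ, p f = p g → S f • ψ = S g • ψ := by
    intro f g h
    have h1 : S (f - g) • ψ = 0 := key _ (by rw [map_sub, h, sub_self])
    rw [map_sub, sub_zsmul] at h1
    exact sub_eq_zero.mp h1
  -- surjectivity of p
  have hsurj : Function.Surjective p := by
    have hle : (⊤ : AddSubgroup A) ≤ p.range := by
      rw [← h1b]
      refine (AddSubgroup.closure_le _).mpr ?_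
      rintro _ ⟨z, rfl⟩
      exact ⟨Finsupp.single z 1, by rw [hp_single, one_smul]⟩
    intro a
    obtain ⟨f, hf⟩ := hle (AddSubgroup.mem_top a)
    exact ⟨f, hf⟩
  let r : A → (ℤ →₀ ℤ) := Function.surjInv hsurj
  have hr : ∀ a, p (r a) = a := fun a => Function.surjInv_eq hsurj a
  let Λ : A → AddAut A := fun a => S (r a) • ψ
  have hΛ : ∀ a, Λ a = S (r a) • ψ := fun _ => rfl
  have hrep : ∀ (f : ℤ →₀ ℤ) (a : A), p f = a → Λ a = S f • ψ := by
    intro f a h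
    exact W (r a) f (by rw [hr, h])
  -- Λ = ψ on the orbit
  have hΛX : ∀ t ∈ (Set.range fun z : ℤ => (z • ψ) x), Λ t = ψ := by
    rintro _ ⟨z, rfl⟩
    rw [hrep (Finsupp.single z 1) _ (by rw [hp_single, one_smul]), hS_single, one_zsmul]
  -- Λ is a homomorphism
  have hΛadd : ∀ a b, Λ (a + b) = Λ a + Λ b := by
    intro a b
    rw [hrep (r a + r b) (a + b) (by rw [map_add, hr, hr]), map_add, add_zsmul, hΛ, hΛ]
  have hΛ0 : Λ 0 = 0 := by
    have h := hΛadd 0 0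
    rw [add_zero] at h
    exact (left_eq_add.mp h)
  have hΛneg : ∀ a, Λ (-a) = -Λ a := by
    intro a
    have h := hΛadd a (-a)
    rw [add_neg_cancel, hΛ0] at h
    exact eq_neg_of_add_eq_zero_right h.symm
  -- shift invariance
  have hmapp : ∀ (m : ℤ) (f : ℤ →₀ ℤ),
      p (Finsupp.mapDomain (· + m) f) = (m • ψ) (p f) ∧
      S (Finsupp.mapDomain (· + m) f) = S f := by
    intro m f
    induction f using Finsupp.induction with
    | zero => simp [Finsupp.mapDomain_zero]
    | single_add a b f _ _ ih =>
      rw [Finsupp.mapDomain_add, Finsupp.mapDomain_single]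
      constructor
      · rw [map_add, map_add, hp_single, hp_single, ih.1, map_add, map_zsmul]
        congr 2
        show _ = ((m • ψ) + (a • ψ)) x
        rw [← add_zsmul, add_comm]
      · rw [map_add, map_add, hS_single, hS_single, ih.2]
  have hshift : ∀ (m : ℤ) (b : A), Λ ((m • ψ) b) = Λ b := by
    intro m b
    have h := hmapp m (r b)
    rw [hr] at h
    rw [hrep _ _ h.1, h.2, hΛ]
  have hΛΛ : ∀ a b, Λ (Λ a b) = Λ b := by
    intro a b
    rw [hΛ a]
    exact hshift _ b
  have hΛinvap : ∀ a b, Λ ((-Λ a) b) = Λ b := by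
    intro a b
    rw [hΛ a, ← neg_zsmul]
    exact hshift _ b
  -- the data
  refine ⟨Λ, 0, fun a => -((-Λ a) a), hΛX, hΛadd, ?_, ?_, ?_, ?_, ?_, ?_, ?_, ?_⟩
  · -- associativity
    intro a b c
    have h1 : Λ (a + Λ a b) = Λ a + Λ b := by rw [hΛadd, hΛΛ]
    rw [h1, map_add]
    show a + Λ a b + (Λ a) ((Λ b) c) = _
    rw [add_assoc]
  · intro a; rw [hΛ0]; show 0 + a = a; rw [zero_add]
  · intro a; rw [map_zero, add_zero]
  · intro a
    have h1 : Λ (-((-Λ a) a)) = -Λ a := by rw [hΛneg, hΛinvap]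
    rw [h1, neg_add_cancel]
  · intro a
    rw [map_neg]
    have h1 : (Λ a) ((-Λ a) a) = a := (Λ a).apply_symm_apply a
    rw [h1, add_neg_cancel]
  · intro a b c
    rw [map_add]; abel
  · -- one-generator
    refine ⟨x, ?_⟩
    have hB : ∀ B : Set A, IsSubBraceF (fun a b => a + Λ a b)
        (fun a => -((-Λ a) a)) B → x ∈ B → B = Set.univ := by
      rintro B ⟨⟨Sa, hSa⟩, -, hmul, -⟩ hxB
      have hmem : ∀ y : A, y ∈ B ↔ y ∈ Sa := by
        intro y; rw [← hSa]; exact Iff.rfl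
      have hz : ∀ z : ℤ, (z • ψ) x ∈ Sa := by
        intro z
        induction z using Int.induction_on with
        | zero =>
          have : x ∈ Sa := (hmem x).mp hxB
          simpa using this
        | succ k ih =>
          have hb : ((k : ℤ) • ψ) x ∈ B := (hmem _).mpr ih
          have hmm : ((k : ℤ) • ψ) x + Λ (((k : ℤ) • ψ) x) (((k : ℤ) • ψ) x) ∈ Sa :=
            (hmem _).mp (hmul _ hb _ hb)
          rw [hΛX _ ⟨k, rfl⟩] at hmm
          have h3 := Sa.sub_mem hmm ih
          rw [add_sub_cancel_left] at h3
          have heq : (((k : ℤ) + 1) • ψ) x = ψ (((k : ℤ) • ψ) x) := by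
            show _ = (ψ + (k : ℤ) • ψ) x
            rw [show ((k : ℤ) + 1) = 1 + (k : ℤ) by ring, add_zsmul, one_zsmul]
          rwa [heq]
        | pred k ih =>
          have hb : ((-(k : ℤ)) • ψ) x ∈ B := (hmem _).mpr ih
          have hnb : -(((-(k : ℤ)) • ψ) x) ∈ B := (hmem _).mpr (Sa.neg_mem ih)
          have hmm : -(((-(k : ℤ)) • ψ) x) +
              Λ (-(((-(k : ℤ)) • ψ) x)) (((-(k : ℤ)) • ψ) x) ∈ Sa :=
            (hmem _).mp (hmul _ hnb _ hb)
          rw [hΛneg, hΛX _ ⟨-(k : ℤ), rfl⟩] at hmm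
          have h3 := Sa.add_mem hmm ih
          rw [neg_add_cancel_comm] at h3
          have heq : ((-(k : ℤ) - 1) • ψ) x = (-ψ) (((-(k : ℤ)) • ψ) x) := by
            show _ = (-ψ + (-(k : ℤ)) • ψ) x
            rw [← neg_one_zsmul ψ, ← add_zsmul,
              show ((-1 : ℤ) + -(k : ℤ)) = (-(k : ℤ) - 1) by ring]
          rwa [heq]
      have hSatop : Sa = ⊤ := by
        rw [eq_top_iff, ← h1b]
        refine (AddSubgroup.closure_le _).mpr ?_
        rintro _ ⟨z, rfl⟩
        exact hz z
      rw [← hSa, hSatop]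
      rfl
    apply Set.eq_univ_of_univ_subset
    intro a _
    rw [braceClosureF, Set.mem_sInter]
    rintro B ⟨hB', hxB⟩
    rw [hB B hB' hxB]
    trivial
  · -- multipermutation level 2
    have hψne : ψ ≠ 0 := by
      intro h
      obtain ⟨u, ⟨zu, hu⟩, v, ⟨zv, hv⟩, huv⟩ := h1a
      apply huv
      rw [← hu, ← hv]
      show (zu • ψ) x = (zv • ψ) x
      rw [h, zsmul_zero, zsmul_zero]
    constructor
    · -- Soc₂ = univ
      apply Set.eq_univ_of_univ_subset
      intro a _
      show ∀ b, _ ∈ socSeqF _ 1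
      intro b
      show ∀ c, _ ∈ ({0} : Set A)
      intro c
      rw [Set.mem_singleton_iff]
      have hΛd : Λ (a + b - (a + Λ a b)) = 0 := by
        rw [show a + b - (a + Λ a b) = b + -(Λ a b) by abel, hΛadd, hΛneg, hΛΛ,
          add_neg_cancel]
      show (a + b - (a + Λ a b)) + c -
        ((a + b - (a + Λ a b)) + Λ (a + b - (a + Λ a b)) c) = 0
      rw [hΛd]
      show _ + c - (_ + c) = 0
      abel
    · intro m hm
      interval_cases m
      · -- Soc₀ ≠ univ
        intro h
        obtain ⟨u, -, v, -, huv⟩ := h1a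
        have hu : u ∈ socSeqF (fun a b => a + Λ a b) 0 := by rw [h]; trivial
        have hv : v ∈ socSeqF (fun a b => a + Λ a b) 0 := by rw [h]; trivial
        have hu' : u = 0 := hu
        have hv' : v = 0 := hv
        exact huv (hu'.trans hv'.symm)
      · -- Soc₁ ≠ univ
        intro h
        apply hψne
        have hx : x ∈ socSeqF (fun a b => a + Λ a b) 1 := by rw [h]; trivial
        have hΛx : Λ x = ψ := hΛX x ⟨0, by show ((0 : ℤ) • ψ) x = x; rw [zero_zsmul]; rfl⟩
        ext b
        have hb : x + b - (x + Λ x b) = 0 := hx b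
        have hΛb : Λ x b = b := by
          have h4 : x + b - (x + Λ x b) = b - Λ x b := by abel
          rw [h4, sub_eq_zero] at hb
          exact hb.symm
        rw [hΛx] at hΛb
        exact hΛb
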